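/- Let A_1, ..., A_m and B_1, ..., B_m be linear subspaces of ℝ^N with dim(A_i) + dim(B_i) = N for all i, such that A_i ∩ B_i = {0} for all 1 ≤ i ≤ m and dim(A_i ∩ B_j) > 0 for all 1 ≤ i < j ≤ m. Then the vectors ∧A_1, ∧A_2, ..., ∧A_m are linearly independent in the exterior algebra of ℝ^N, where for a k-dimensional subspace T with basis {v_1,...,v_k}, ∧T denotes v_1 ∧ v_2 ∧ ... ∧ v_k. -/

import Mathlib

set_option synthInstance.maxHeartbeats 1000000
set_option maxHeartbeats 1000000

open ExteriorAlgebra Module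

section Aux

variable {R : Type*} [CommRing R] {M : Type*} [AddCommGroup M] [Module R M]

lemma ιMulti_fin_append {p q : ℕ} (a : Fin p → M) (b : Fin q → M) :
    ExteriorAlgebra.ιMulti R (p + q) (Fin.append a b) =
      ExteriorAlgebra.ιMulti R p a * ExteriorAlgebra.ιMulti R q b := by
  simp only [ExteriorAlgebra.ιMulti_apply]
  rw [← List.prod_append, ← List.ofFn_fin_append]
  congr 1
  apply congrArg
  funext x
  refine Fin.addCases (fun i => ?_) (fun i => ?_) x <;> simp

lemma linearIndependent_fin_append_iff {K : Type*} [Field K] {V : Type*} [AddCommGroup V]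
    [Module K V] {p q : ℕ} {a : Fin p → V} {b : Fin q → V} :
    LinearIndependent K (Fin.append a b) ↔
      LinearIndependent K a ∧ LinearIndependent K b ∧
        Disjoint (Submodule.span K (Set.range a)) (Submodule.span K (Set.range b)) := by
  have heq : Fin.append a b ∘ finSumFinEquiv = Sum.elim a b := by
    funext x
    cases x with
    | inl i => simp
    | inr i => simp
  rw [← linearIndependent_equiv finSumFinEquiv, heq, linearIndependent_sum]
  have h1 : Sum.elim a b ∘ Sum.inl = a := rfl
  have h2 : Sum.elim a b ∘ Sum.inr = b := rfl
  rw [h1, h2]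

lemma wedge_ne_zero_of_linearIndependent {N n : ℕ} (hn : n = N)
    (v : Fin n → (Fin N → ℝ)) (hv : LinearIndependent ℝ v) :
    ExteriorAlgebra.ιMulti ℝ n v ≠ 0 := by
  subst hn
  rcases Nat.eq_zero_or_pos n with h0 | hpos
  · subst h0
    rw [ExteriorAlgebra.ιMulti_zero_apply]
    exact one_ne_zero
  · have : Nonempty (Fin n) := ⟨⟨0, hpos⟩⟩
    have hcard : Fintype.card (Fin n) = finrank ℝ (Fin n → ℝ) := by
      simp [Module.finrank_fintype_fun_eq_card]
    let b' : Basis (Fin n) ℝ (Fin n → ℝ) := basisOfLinearIndependentOfCardEqFinrank hv hcard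
    classical
    let f : ∀ i, (Fin n → ℝ) [⋀^Fin i]→ₗ[ℝ] ℝ :=
      Function.update (fun _ => 0) n b'.det
    intro h
    have := congrArg (ExteriorAlgebra.liftAlternating f) h
    rw [ExteriorAlgebra.liftAlternating_apply_ιMulti, map_zero] at this
    have hf : f n = b'.det := Function.update_self _ _ _
    rw [hf] at this
    have hb : ⇑b' = v := coe_basisOfLinearIndependentOfCardEqFinrank hv hcard
    rw [← hb, Basis.det_self] at this
    exact one_ne_zero this

end Aux

/-- Triangular criterion via wedge products: if `dim Aᵢ + dim Bᵢ = N`,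
`Aᵢ ∩ Bᵢ = {0}` for all `i` and `dim (Aᵢ ∩ Bⱼ) > 0` for `i < j`, then the wedges
`∧A₁, …, ∧Aₘ` (formed from any bases of the `Aᵢ`) are linearly independent in the
exterior algebra of `ℝᴺ`. -/
theorem triangular_criterion_wedge (N m : ℕ)
    (A B : Fin m → Submodule ℝ (Fin N → ℝ))
    (hdim : ∀ i, Module.finrank ℝ ↥(A i) + Module.finrank ℝ ↥(B i) = N)
    (hmeet : ∀ i, A i ⊓ B i = ⊥)
    (hcross : ∀ i j, i < j → 0 < Module.finrank ℝ ↥(A i ⊓ B j))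
    (bas : ∀ i, Basis (Fin (Module.finrank ℝ ↥(A i))) ℝ ↥(A i)) :
    LinearIndependent ℝ fun i =>
      ExteriorAlgebra.ιMulti ℝ (Module.finrank ℝ ↥(A i))
        fun j => ((bas i j : ↥(A i)) : Fin N → ℝ) := by
  classical
  set M := Fin N → ℝ
  -- coerced bases for A i and B j
  set a : ∀ i, Fin (finrank ℝ ↥(A i)) → M := fun i j => ((bas i j : ↥(A i)) : M) with ha_def
  have basB : ∀ j, Basis (Fin (finrank ℝ ↥(B j))) ℝ ↥(B j) := fun j => Module.finBasis ℝ ↥(B j)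
  set b : ∀ j, Fin (finrank ℝ ↥(B j)) → M := fun j l => ((basB j l : ↥(B j)) : M) with hb_def
  -- basic facts
  have ha_indep : ∀ i, LinearIndependent ℝ (a i) := fun i =>
    ((bas i).linearIndependent).map' (A i).subtype ((A i).ker_subtype)
  have hb_indep : ∀ j, LinearIndependent ℝ (b j) := fun j =>
    ((basB j).linearIndependent).map' (B j).subtype ((B j).ker_subtype)
  have ha_span : ∀ i, Submodule.span ℝ (Set.range (a i)) = A i := by
    intro i
    have : Set.range (a i) = (A i).subtype '' Set.range (bas i) := by
      rw [← Set.range_comp]; rfl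
    rw [this, Submodule.span_image, (bas i).span_eq, Submodule.map_top, Submodule.range_subtype]
  have hb_span : ∀ j, Submodule.span ℝ (Set.range (b j)) = B j := by
    intro j
    have : Set.range (b j) = (B j).subtype '' Set.range (basB j) := by
      rw [← Set.range_comp]; rfl
    rw [this, Submodule.span_image, (basB j).span_eq, Submodule.map_top, Submodule.range_subtype]
  set v : Fin m → ExteriorAlgebra ℝ M := fun i =>
    ExteriorAlgebra.ιMulti ℝ (finrank ℝ ↥(A i)) (a i) with hv_def
  set u : Fin m → ExteriorAlgebra ℝ M := fun j =>
    ExteriorAlgebra.ιMulti ℝ (finrank ℝ ↥(B j)) (b j) with hu_def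
  -- cross vanishing
  have hmul_zero : ∀ i j, i < j → v i * u j = 0 := by
    intro i j hij
    rw [hv_def, hu_def, ← ιMulti_fin_append]
    apply AlternatingMap.map_linearDependent
    intro hind
    rw [linearIndependent_fin_append_iff] at hind
    obtain ⟨-, -, hdisj⟩ := hind
    rw [ha_span, hb_span] at hdisj
    have hb : A i ⊓ B j = ⊥ := disjoint_iff.mp hdisj
    have h2 := hcross i j hij
    rw [hb] at h2
    simp at h2
  -- diagonal nonvanishing
  have hmul_ne : ∀ j, v j * u j ≠ 0 := by
    intro j
    rw [hv_def, hu_def, ← ιMulti_fin_append]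
    apply wedge_ne_zero_of_linearIndependent (hdim j)
    rw [linearIndependent_fin_append_iff]
    refine ⟨ha_indep j, hb_indep j, ?_⟩
    rw [ha_span, hb_span, disjoint_iff, hmeet j]
  -- main argument
  rw [Fintype.linearIndependent_iff]
  intro g hg
  by_contra hne
  push_neg at hne
  obtain ⟨i₀, hi₀⟩ := hne
  set S : Finset (Fin m) := Finset.univ.filter (fun i => g i ≠ 0) with hS
  have hSne : S.Nonempty := ⟨i₀, by simp [hS, hi₀]⟩
  set j := S.max' hSne with hj
  have hjS : j ∈ S := S.max'_mem hSne
  have hgj : g j ≠ 0 := by simpa [hS] using hjS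
  have h0 : ∑ i, g i • (v i * u j) = 0 := by
    have : ∑ i, g i • (v i * u j) = (∑ i, g i • v i) * u j := by
      rw [Finset.sum_mul]
      exact Finset.sum_congr rfl fun i _ => (smul_mul_assoc _ _ _).symm
    rw [this, hg, zero_mul]
  have hsingle : ∑ i, g i • (v i * u j) = g j • (v j * u j) := by
    apply Finset.sum_eq_single_of_mem j (Finset.mem_univ j)
    intro i _ hij
    rcases lt_or_gt_of_ne hij with h | h
    · rw [hmul_zero i j h, smul_zero]
    · have : i ∉ S := fun hiS => absurd (S.le_max' i hiS) (not_le.mpr h)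
      have : g i = 0 := by simpa [hS] using this
      rw [this, zero_smul]
  rw [hsingle] at h0
  rcases smul_eq_zero.mp h0 with h | h
  · exact hgj h
  · exact hmul_ne j h
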